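/- Let c ∈ ℤ^n, set c* = ‖c‖₁ + 2 where ‖c‖₁ = Σ_{j=1}^n |c(j)|, and define v ∈ ℝ^n by v(j) = (c*)^j. For w ∈ {0,1}^n define f(w) = max({j ∈ {1,…,n} : w(j) = 1} ∪ {0}). Let x, u⁰, u¹ ∈ {0,1}^n satisfy f(x) < f(u⁰) < f(u¹), ⟨c, u⁰ − x⟩ ≥ 1, and ⟨c, u¹ − x⟩ ≥ 1. Then ⟨v, u⁰ − x⟩ > 0, ⟨v, u¹ − x⟩ > 0, and ⟨c, u⁰ − x⟩ / ⟨v, u⁰ − x⟩ > ⟨c, u¹ − x⟩ / ⟨v, u¹ − x⟩. -/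

import Mathlib

open Finset

attribute [local instance] Classical.propDecidable

noncomputable section

/-- Standard dot product on `Fin n → ℝ`. -/
def dotR {n : ℕ} (c x : Fin n → ℝ) : ℝ := ∑ i, c i * x i

/-- A polytope: the convex hull of a finite nonempty set of points. -/
def IsPolytope {n : ℕ} (P : Set (Fin n → ℝ)) : Prop :=
  ∃ V : Finset (Fin n → ℝ), V.Nonempty ∧ P = convexHull ℝ (V : Set (Fin n → ℝ))

/-- A 0/1 polytope: the convex hull of a finite nonempty subset of `{0,1}^n`. -/
def IsPolytope01 {n : ℕ} (P : Set (Fin n → ℝ)) : Prop :=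
  ∃ V : Finset (Fin n → ℝ), V.Nonempty ∧ (∀ w ∈ V, ∀ i, w i = 0 ∨ w i = 1) ∧
    P = convexHull ℝ (V : Set (Fin n → ℝ))

/-- A vertex of `P` is an extreme point of `P`. -/
def IsVertex {n : ℕ} (P : Set (Fin n → ℝ)) (x : Fin n → ℝ) : Prop :=
  x ∈ P.extremePoints ℝ

/-- Two distinct vertices are adjacent when the segment between them is a face. -/
def Adjacent {n : ℕ} (P : Set (Fin n → ℝ)) (x y : Fin n → ℝ) : Prop :=
  IsVertex P x ∧ IsVertex P y ∧ x ≠ y ∧ IsExtreme ℝ P (segment ℝ x y)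

/-- `u` is a `w`-improving neighbor of `x`. -/
def ImpNbr {n : ℕ} (P : Set (Fin n → ℝ)) (w x u : Fin n → ℝ) : Prop :=
  Adjacent P x u ∧ dotR w x < dotR w u

/-- A Shadow-rule path on `P` with auxiliary vector `v` and objective `c`:
vertices `x 0, …, x k`, each step a `v`-improving neighbor maximizing the slope
`⟨c, u − xᵢ⟩ / ⟨v, u − xᵢ⟩` over all `v`-improving neighbors, and the last vertex
has no `v`-improving neighbor. -/
def ShadowPath {n : ℕ} (P : Set (Fin n → ℝ)) (c v : Fin n → ℝ) (k : ℕ)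
    (x : ℕ → Fin n → ℝ) : Prop :=
  (∀ i ≤ k, IsVertex P (x i)) ∧
  (∀ i < k, ImpNbr P v (x i) (x (i + 1)) ∧
    ∀ u, ImpNbr P v (x i) u →
      dotR c (u - x i) / dotR v (u - x i)
        ≤ dotR c (x (i + 1) - x i) / dotR v (x (i + 1) - x i)) ∧
  (∀ u, ¬ ImpNbr P v (x k) u)

/-- `f(u)` relative to `x0`: the largest index (in `1, …, n` labelling) where `u`
differs from `x0`, and `0` if there is none. -/
def lastIdx {n : ℕ} (x0 u : Fin n → ℝ) : ℕ :=
  (Finset.univ.filter fun j : Fin n => u j ≠ x0 j).sup fun j => (j : ℕ) + 1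

/-- `f(w)` for a 0/1 vector: the largest index (in `1, …, n` labelling) with
`w j = 1`, and `0` for the zero vector. -/
def lastOne {n : ℕ} (w : Fin n → ℝ) : ℕ :=
  (Finset.univ.filter fun j : Fin n => w j = 1).sup fun j => (j : ℕ) + 1

/-- Claim 2 (slope comparison, distinct `f`-values): with `c* = ‖c‖₁ + 2` and
`v(j) = (c*)ʲ`, if `f(x) < f(u⁰) < f(u¹)` and both `u⁰, u¹` are `c`-improving by at
least `1`, then both are `v`-improving and `u⁰` has strictly larger slope. -/

lemma zo_sub_abs_le {a b : ℝ} (ha : a = 0 ∨ a = 1) (hb : b = 0 ∨ b = 1) :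
    |a - b| ≤ 1 := by
  rcases ha with h | h <;> rcases hb with h' | h' <;> simp [h, h']

lemma lastOne_eq_zero_of_gt {n : ℕ} {u : Fin n → ℝ} (hu : ∀ j, u j = 0 ∨ u j = 1)
    {j : Fin n} (h : lastOne u < (j : ℕ) + 1) : u j = 0 := by
  rcases hu j with h0 | h1
  · exact h0
  · exfalso
    have hle : (j : ℕ) + 1 ≤ lastOne u := by
      apply Finset.le_sup (f := fun j : Fin n => (j : ℕ) + 1)
      simp [h1]
    omega

lemma lastOne_le {n : ℕ} (u : Fin n → ℝ) : lastOne u ≤ n := by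
  apply Finset.sup_le
  intro j _
  exact j.isLt

lemma exists_lastOne {n : ℕ} {u : Fin n → ℝ} (h : 1 ≤ lastOne u) :
    ∃ j : Fin n, u j = 1 ∧ (j : ℕ) + 1 = lastOne u := by
  by_cases hne : (Finset.univ.filter fun j : Fin n => u j = 1).Nonempty
  · obtain ⟨j, hj, hsup⟩ :=
      Finset.exists_mem_eq_sup _ hne (fun j : Fin n => (j : ℕ) + 1)
    refine ⟨j, ?_, hsup.symm⟩
    simpa using hj
  · rw [Finset.not_nonempty_iff_eq_empty] at hne
    rw [lastOne, hne] at h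
    simp at h

lemma sum_ite_fin {n m : ℕ} (hmn : m ≤ n) (g : ℕ → ℝ) :
    (∑ j : Fin n, (if (j : ℕ) < m then g (j : ℕ) else 0)) = ∑ i ∈ Finset.range m, g i := by
  rw [Fin.sum_univ_eq_sum_range (fun i => if i < m then g i else 0) n]
  rw [← Finset.sum_filter]
  congr 1
  ext i
  simp only [Finset.mem_filter, Finset.mem_range]
  omega

lemma dotR_le_sum_abs {n : ℕ} (c w : Fin n → ℝ) (hw : ∀ j, |w j| ≤ 1) :
    dotR c w ≤ ∑ j, |c j| := by
  apply Finset.sum_le_sum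
  intro j _
  calc c j * w j ≤ |c j * w j| := le_abs_self _
    _ = |c j| * |w j| := abs_mul _ _
    _ ≤ |c j| * 1 := mul_le_mul_of_nonneg_left (hw j) (abs_nonneg _)
    _ = |c j| := mul_one _

lemma dotv_bounds {n : ℕ} {cstar : ℝ} (hcs : 1 ≤ cstar) {u x : Fin n → ℝ}
    (hu : ∀ j, u j = 0 ∨ u j = 1) (hx : ∀ j, x j = 0 ∨ x j = 1)
    (hlt : lastOne x < lastOne u) :
    cstar ^ lastOne u - (∑ i ∈ Finset.range (lastOne u - 1), cstar ^ (i + 1))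
        ≤ dotR (fun j : Fin n => cstar ^ ((j : ℕ) + 1)) (u - x) ∧
      dotR (fun j : Fin n => cstar ^ ((j : ℕ) + 1)) (u - x)
        ≤ ∑ i ∈ Finset.range (lastOne u), cstar ^ (i + 1) := by
  set m := lastOne u with hm
  have hm1 : 1 ≤ m := by omega
  have hmn : m ≤ n := lastOne_le u
  have hcpos : (0 : ℝ) < cstar := by linarith
  obtain ⟨j0, hj0u, hj0m⟩ := exists_lastOne hm1
  have hj0x : x j0 = 0 := lastOne_eq_zero_of_gt hx (by omega)
  have hzero : ∀ j : Fin n, m < (j : ℕ) + 1 → u j - x j = 0 := by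
    intro j hj
    rw [lastOne_eq_zero_of_gt hu hj, lastOne_eq_zero_of_gt hx (by omega)]
    ring
  have habs : ∀ j : Fin n, |u j - x j| ≤ 1 := fun j => zo_sub_abs_le (hu j) (hx j)
  have hdot : dotR (fun j : Fin n => cstar ^ ((j : ℕ) + 1)) (u - x)
      = ∑ j : Fin n, cstar ^ ((j : ℕ) + 1) * (u j - x j) := by
    simp [dotR]
  constructor
  · have h1 : ∀ j : Fin n,
        (if j = j0 then cstar ^ m else 0)
          - (if (j : ℕ) < m - 1 then cstar ^ ((j : ℕ) + 1) else 0)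
          ≤ cstar ^ ((j : ℕ) + 1) * (u j - x j) := by
      intro j
      by_cases hj : j = j0
      · subst hj
        rw [if_pos rfl, if_neg (by omega), hj0u, hj0x, hj0m]
        norm_num
        exact le_rfl
      · rw [if_neg hj]
        by_cases hlt' : (j : ℕ) < m - 1
        · rw [if_pos hlt']
          have hge : -(1 : ℝ) ≤ u j - x j := by
            have := (abs_le.mp (habs j)).1; linarith
          have hp : (0 : ℝ) < cstar ^ ((j : ℕ) + 1) := pow_pos hcpos _
          nlinarith
        · rw [if_neg hlt']
          have hne : (j : ℕ) + 1 ≠ m := by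
            intro hjm
            exact hj (Fin.ext (by omega))
          have hgt : m < (j : ℕ) + 1 := by omega
          rw [hzero j hgt]
          simp
    rw [hdot]
    calc cstar ^ m - (∑ i ∈ Finset.range (m - 1), cstar ^ (i + 1))
        = ∑ j : Fin n, ((if j = j0 then cstar ^ m else 0)
            - (if (j : ℕ) < m - 1 then cstar ^ ((j : ℕ) + 1) else 0)) := by
          rw [Finset.sum_sub_distrib, Finset.sum_ite_eq' Finset.univ j0 (fun _ => cstar ^ m),
            sum_ite_fin (by omega) (fun i => cstar ^ (i + 1))]
          simp
      _ ≤ ∑ j : Fin n, cstar ^ ((j : ℕ) + 1) * (u j - x j) :=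
          Finset.sum_le_sum fun j _ => h1 j
  · have h2 : ∀ j : Fin n, cstar ^ ((j : ℕ) + 1) * (u j - x j)
        ≤ (if (j : ℕ) < m then cstar ^ ((j : ℕ) + 1) else 0) := by
      intro j
      by_cases hjm : (j : ℕ) < m
      · rw [if_pos hjm]
        have hle1 : u j - x j ≤ 1 := by
          have := (abs_le.mp (habs j)).2; linarith
        have hp : (0 : ℝ) < cstar ^ ((j : ℕ) + 1) := pow_pos hcpos _
        nlinarith
      · rw [if_neg hjm, hzero j (by omega)]
        simp
    rw [hdot]
    calc (∑ j : Fin n, cstar ^ ((j : ℕ) + 1) * (u j - x j))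
        ≤ ∑ j : Fin n, (if (j : ℕ) < m then cstar ^ ((j : ℕ) + 1) else 0) :=
          Finset.sum_le_sum fun j _ => h2 j
      _ = ∑ i ∈ Finset.range m, cstar ^ (i + 1) :=
          sum_ite_fin hmn (fun i => cstar ^ (i + 1))

lemma geom_aux {cstar : ℝ} (k : ℕ) :
    (∑ i ∈ Finset.range k, cstar ^ (i + 1)) * (cstar - 1) = cstar ^ (k + 1) - cstar := by
  have h : (∑ i ∈ Finset.range k, cstar ^ (i + 1))
      = cstar * ∑ i ∈ Finset.range k, cstar ^ i := by
    rw [Finset.mul_sum]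
    refine Finset.sum_congr rfl fun i _ => ?_
    ring
  calc (∑ i ∈ Finset.range k, cstar ^ (i + 1)) * (cstar - 1)
      = cstar * ((∑ i ∈ Finset.range k, cstar ^ i) * (cstar - 1)) := by rw [h]; ring
    _ = cstar * (cstar ^ k - 1) := by rw [geom_sum_mul]
    _ = cstar ^ (k + 1) - cstar := by ring

theorem slope_comparison_distinct_f {n : ℕ} (c : Fin n → ℤ) (cR : Fin n → ℝ)
    (hcR : cR = fun i => (c i : ℝ))
    (cstar : ℝ) (hcstar : cstar = (∑ j, |(c j : ℝ)|) + 2)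
    (v : Fin n → ℝ) (hv : v = fun j : Fin n => cstar ^ ((j : ℕ) + 1))
    (x u0 u1 : Fin n → ℝ)
    (hx : ∀ j, x j = 0 ∨ x j = 1) (hu0 : ∀ j, u0 j = 0 ∨ u0 j = 1)
    (hu1 : ∀ j, u1 j = 0 ∨ u1 j = 1)
    (hf0 : lastOne x < lastOne u0) (hf1 : lastOne u0 < lastOne u1)
    (hc0 : 1 ≤ dotR cR (u0 - x)) (hc1 : 1 ≤ dotR cR (u1 - x)) :
    0 < dotR v (u0 - x) ∧ 0 < dotR v (u1 - x) ∧
      dotR cR (u1 - x) / dotR v (u1 - x) < dotR cR (u0 - x) / dotR v (u0 - x) := by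
  subst hcR hv
  set N := ∑ j, |(c j : ℝ)| with hN
  have hNnn : (0 : ℝ) ≤ N := Finset.sum_nonneg fun j _ => abs_nonneg _
  have hw0 : ∀ j, |(u0 - x) j| ≤ 1 := fun j => by
    simpa using zo_sub_abs_le (hu0 j) (hx j)
  have hw1 : ∀ j, |(u1 - x) j| ≤ 1 := fun j => by
    simpa using zo_sub_abs_le (hu1 j) (hx j)
  have hd0le : dotR (fun i => (c i : ℝ)) (u0 - x) ≤ N := dotR_le_sum_abs _ _ hw0
  have hd1le : dotR (fun i => (c i : ℝ)) (u1 - x) ≤ N := dotR_le_sum_abs _ _ hw1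
  have hN1 : (1 : ℝ) ≤ N := le_trans hc0 hd0le
  have hcs3 : (3 : ℝ) ≤ cstar := by rw [hcstar]; linarith
  have hcs1 : (1 : ℝ) ≤ cstar := by linarith
  set m0 := lastOne u0 with hm0def
  set m1 := lastOne u1 with hm1def
  have hm01 : 1 ≤ m0 := by omega
  have hm11 : m0 + 1 ≤ m1 := by omega
  obtain ⟨hL0, hU0⟩ := dotv_bounds hcs1 hu0 hx hf0
  obtain ⟨hL1, hU1⟩ := dotv_bounds hcs1 hu1 hx (lt_trans hf0 hf1)
  set V0 := dotR (fun j : Fin n => cstar ^ ((j : ℕ) + 1)) (u0 - x) with hV0def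
  set V1 := dotR (fun j : Fin n => cstar ^ ((j : ℕ) + 1)) (u1 - x) with hV1def
  set S0 := ∑ i ∈ Finset.range m0, cstar ^ (i + 1) with hS0def
  set A0 := ∑ i ∈ Finset.range (m0 - 1), cstar ^ (i + 1) with hA0def
  set A1 := ∑ i ∈ Finset.range (m1 - 1), cstar ^ (i + 1) with hA1def
  have hcpos : (0 : ℝ) < cstar := by linarith
  have hA0nn : (0 : ℝ) ≤ A0 :=
    Finset.sum_nonneg fun i _ => le_of_lt (pow_pos hcpos _)
  have hA1nn : (0 : ℝ) ≤ A1 :=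
    Finset.sum_nonneg fun i _ => le_of_lt (pow_pos hcpos _)
  have hgA0 : A0 * (cstar - 1) = cstar ^ m0 - cstar := by
    have := geom_aux (cstar := cstar) (m0 - 1)
    rwa [show m0 - 1 + 1 = m0 by omega] at this
  have hgA1 : A1 * (cstar - 1) = cstar ^ m1 - cstar := by
    have := geom_aux (cstar := cstar) (m1 - 1)
    rwa [show m1 - 1 + 1 = m1 by omega] at this
  have hgS0 : S0 * (cstar - 1) = cstar ^ (m0 + 1) - cstar := geom_aux m0
  have hp0 : cstar ≤ cstar ^ m0 := by
    calc cstar = cstar ^ 1 := (pow_one _).symm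
      _ ≤ cstar ^ m0 := pow_le_pow_right₀ hcs1 hm01
  have hp1 : cstar ≤ cstar ^ m1 := by
    calc cstar = cstar ^ 1 := (pow_one _).symm
      _ ≤ cstar ^ m1 := pow_le_pow_right₀ hcs1 (by omega)
  have hV0pos : 0 < V0 := by
    nlinarith [mul_nonneg hA0nn (by linarith : (0 : ℝ) ≤ cstar - 3)]
  have hV1pos : 0 < V1 := by
    nlinarith [mul_nonneg hA1nn (by linarith : (0 : ℝ) ≤ cstar - 3)]
  refine ⟨hV0pos, hV1pos, ?_⟩
  rw [div_lt_div_iff₀ hV1pos hV0pos]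
  have hc2 : cstar - 2 = N := by rw [hcstar]; ring
  have hpl : cstar ^ (m0 + 1) ≤ cstar ^ m1 := pow_le_pow_right₀ hcs1 hm11
  have key : N * S0 < V1 := by
    have e1 : (N * S0) * (cstar - 1) = N * (cstar ^ (m0 + 1) - cstar) := by
      rw [mul_assoc, hgS0]
    have e2 : (cstar ^ m1 - A1) * (cstar - 1) = N * cstar ^ m1 + cstar := by
      have h : (cstar ^ m1 - A1) * (cstar - 1)
          = cstar ^ m1 * (cstar - 1) - A1 * (cstar - 1) := by ring
      rw [h, hgA1, ← hc2]
      ring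
    have hmul : (N * S0) * (cstar - 1) < (cstar ^ m1 - A1) * (cstar - 1) := by
      rw [e1, e2]
      nlinarith [mul_le_mul_of_nonneg_left hpl hNnn, mul_nonneg hNnn (le_of_lt hcpos)]
    have hlt' : N * S0 < cstar ^ m1 - A1 :=
      lt_of_mul_lt_mul_right hmul (by linarith)
    linarith
  have step1 : dotR (fun i => (c i : ℝ)) (u1 - x) * V0 ≤ N * V0 :=
    mul_le_mul_of_nonneg_right hd1le (le_of_lt hV0pos)
  have step2 : N * V0 ≤ N * S0 := mul_le_mul_of_nonneg_left hU0 hNnn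
  have step3 : V1 ≤ dotR (fun i => (c i : ℝ)) (u0 - x) * V1 := by
    have h := mul_le_mul_of_nonneg_right hc0 (le_of_lt hV1pos)
    rwa [one_mul] at h
  linarith
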